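/- Let f_n = k_n a_n k'_n ∈ GL(d,ℝ) be a sequence written in polar (KAK) decomposition with k_n, k'_n orthogonal and a_n = diag(a_n^1 ≥ ... ≥ a_n^d > 0). Suppose a_n^i = o(a_n^1) for i > 1 and k'_n^{-1} e_1 → z (a unit vector). Then for every x ∈ ℝ^d, ‖f_n x‖/‖f_n‖ → |⟨z, x⟩| as n → ∞. -/

import Mathlib

open Matrix Filter Topology RealInnerProductSpace

noncomputable def eu (d : ℕ) (x : Fin d → ℝ) : EuclideanSpace ℝ (Fin d) := WithLp.toLp 2 x

lemma eu_inner (d : ℕ) (u v : Fin d → ℝ) : ⟪eu d u, eu d v⟫ = u ⬝ᵥ v := by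
  simp [eu, PiLp.inner_apply, dotProduct, RCLike.inner_apply, mul_comm]

lemma eu_norm_orth {d : ℕ} {A : Matrix (Fin d) (Fin d) ℝ}
    (hA : A ∈ Matrix.orthogonalGroup (Fin d) ℝ) (v : Fin d → ℝ) :
    ‖eu d (A.mulVec v)‖ = ‖eu d v‖ := by
  have h : star A * A = 1 := (Matrix.mem_orthogonalGroup_iff' _ _).mp hA
  have key : (A.mulVec v) ⬝ᵥ (A.mulVec v) = v ⬝ᵥ v := by
    rw [Matrix.dotProduct_mulVec, ← Matrix.mulVec_transpose,
      ← Matrix.conjTranspose_eq_transpose_of_trivial, ← Matrix.star_eq_conjTranspose,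
      Matrix.mulVec_mulVec, h, Matrix.one_mulVec]
  have h2 : ‖eu d (A.mulVec v)‖ ^ 2 = ‖eu d v‖ ^ 2 := by
    rw [← real_inner_self_eq_norm_sq, ← real_inner_self_eq_norm_sq, eu_inner, eu_inner, key]
  exact (sq_eq_sq₀ (norm_nonneg _) (norm_nonneg _)).mp h2

lemma eu_abs_le (d : ℕ) (w : Fin d → ℝ) (i : Fin d) : |w i| ≤ ‖eu d w‖ := by
  rw [EuclideanSpace.norm_eq, ← Real.sqrt_sq_eq_abs]
  refine Real.sqrt_le_sqrt ?_
  have := Finset.single_le_sum (f := fun j => ‖(eu d w) j‖ ^ 2)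
    (fun j _ => sq_nonneg _) (Finset.mem_univ i)
  simpa [eu, Real.norm_eq_abs, sq_abs] using this

/-- KAK (polar) decomposition asymptotics: if `f_n = k_n a_n k'_n` with `k_n, k'_n`
orthogonal and `a_n = diag(a_n^1 ≥ ... ≥ a_n^d > 0)` with `a_n^i = o(a_n^1)` for `i > 1`,
and `k'_n⁻¹ e_1 → z` (a unit vector), then `‖f_n x‖ / ‖f_n‖ → |⟨z, x⟩|` for every `x`
(recall `‖f_n‖ = a_n^1`). -/
theorem stmt13 (d : ℕ) (hd : 0 < d)
    (f k k' : ℕ → Matrix (Fin d) (Fin d) ℝ) (α : ℕ → Fin d → ℝ)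
    (hk : ∀ n, k n ∈ Matrix.orthogonalGroup (Fin d) ℝ)
    (hk' : ∀ n, k' n ∈ Matrix.orthogonalGroup (Fin d) ℝ)
    (hf : ∀ n, f n = k n * Matrix.diagonal (α n) * k' n)
    (hpos : ∀ n i, 0 < α n i)
    (hmono : ∀ n, ∀ i j : Fin d, i ≤ j → α n j ≤ α n i)
    (hlittleo : ∀ i : Fin d, i ≠ ⟨0, hd⟩ →
      Tendsto (fun n => α n i / α n ⟨0, hd⟩) atTop (𝓝 0))
    (z : Fin d → ℝ) (hz : ‖eu d z‖ = 1)
    (hconv : Tendsto (fun n => eu d ((k' n)⁻¹.mulVec (Pi.single ⟨0, hd⟩ 1)))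
      atTop (𝓝 (eu d z))) :
    ∀ x : Fin d → ℝ,
      Tendsto (fun n => ‖eu d ((f n).mulVec x)‖ / α n ⟨0, hd⟩) atTop
        (𝓝 |⟪eu d z, eu d x⟫|) := by
  intro x
  set i0 : Fin d := ⟨0, hd⟩ with hi0
  set y : ℕ → Fin d → ℝ := fun n => (k' n).mulVec x with hy
  set g : ℕ → EuclideanSpace ℝ (Fin d) :=
    fun n => eu d (fun i => (α n i / α n i0) * y n i) with hg
  have hα0 : ∀ n, α n i0 ≠ 0 := fun n => (hpos n i0).ne'
  -- inverse of k' n is its star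
  have hinv : ∀ n, (k' n)⁻¹ = star (k' n) := fun n =>
    Matrix.inv_eq_right_inv ((Matrix.mem_orthogonalGroup_iff _ _).mp (hk' n))
  -- coordinate i0 of y n equals the inner product
  have hy0 : ∀ n, y n i0 = ⟪eu d ((k' n)⁻¹.mulVec (Pi.single i0 1)), eu d x⟫ := by
    intro n
    rw [eu_inner, hinv, Matrix.star_eq_conjTranspose,
      Matrix.conjTranspose_eq_transpose_of_trivial, Matrix.mulVec_transpose,
      ← Matrix.dotProduct_mulVec, single_dotProduct, one_mul]
  -- norm equality
  have heq : ∀ n, ‖eu d ((f n).mulVec x)‖ / α n i0 = ‖g n‖ := by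
    intro n
    have h1 : (f n).mulVec x = (k n).mulVec ((Matrix.diagonal (α n)).mulVec (y n)) := by
      rw [hf, ← Matrix.mulVec_mulVec, ← Matrix.mulVec_mulVec]
    have h2 : g n = (α n i0)⁻¹ • eu d ((Matrix.diagonal (α n)).mulVec (y n)) := by
      ext i
      simp only [hg, eu, PiLp.smul_apply, smul_eq_mul, Matrix.mulVec_diagonal]
      field_simp
    rw [h1, eu_norm_orth (hk n), h2, norm_smul, Real.norm_eq_abs,
      abs_inv, abs_of_pos (hpos n i0), div_eq_inv_mul]
  -- limit vector
  set L : EuclideanSpace ℝ (Fin d) := EuclideanSpace.single i0 (⟪eu d z, eu d x⟫) with hL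
  have hgL : Tendsto g atTop (𝓝 L) := by
    suffices hs : Tendsto (fun n => WithLp.ofLp (g n)) atTop (𝓝 (WithLp.ofLp L)) by
      exact ((PiLp.continuous_toLp 2 _).tendsto _).comp hs
    rw [tendsto_pi_nhds]
    intro i
    by_cases hi : i = i0
    · subst hi
      have : ∀ n, g n i0 = y n i0 := by
        intro n
        simp only [hg, eu, div_self (hα0 n), one_mul]
      rw [show L i0 = ⟪eu d z, eu d x⟫ by simp [hL, EuclideanSpace.single_apply]]
      refine Tendsto.congr (fun n => (this n).symm) ?_
      simp only [hy0]
      exact (hconv.inner tendsto_const_nhds)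
    · have hL0 : L i = 0 := by simp [hL, EuclideanSpace.single_apply, hi]
      rw [hL0]
      have hb2 : Tendsto (fun n => (α n i / α n i0) * ‖eu d x‖) atTop (𝓝 0) := by
        simpa using (hlittleo i hi).mul_const ‖eu d x‖
      refine squeeze_zero_norm (fun n => ?_) hb2
      · have hb : |y n i| ≤ ‖eu d x‖ := by
          have := eu_abs_le d (y n) i
          rwa [hy, eu_norm_orth (hk' n)] at this
        have hnn : 0 ≤ α n i / α n i0 := le_of_lt (div_pos (hpos n i) (hpos n i0))
        calc ‖g n i‖ = (α n i / α n i0) * |y n i| := by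
              simp [hg, eu, Real.norm_eq_abs, abs_mul, abs_div, abs_of_pos (hpos n i), abs_of_pos (hpos n i0)]
          _ ≤ (α n i / α n i0) * ‖eu d x‖ := by
              exact mul_le_mul_of_nonneg_left hb hnn
  have hnorm : Tendsto (fun n => ‖g n‖) atTop (𝓝 ‖L‖) := hgL.norm
  have hLn : ‖L‖ = |⟪eu d z, eu d x⟫| := by
    rw [hL, EuclideanSpace.norm_single, Real.norm_eq_abs]
  rw [← hLn]
  exact Tendsto.congr (fun n => (heq n).symm) hnorm
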